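/- Let S ∈ ℝ and let (Z, v₁, v₂, P) be functions ℝ × ℝ → ℝ of (t,x), three times continuously differentiable, solving the dimensionless Choi–Camassa system with parameter S at every point. Then for any constants t₀, x₀, C ∈ ℝ and any differentiable function P₀ : ℝ → ℝ, the transformed fields Z*(t,x) = Z(t−t₀, x−x₀−Ct), vᵢ*(t,x) = vᵢ(t−t₀, x−x₀−Ct) + C (i = 1,2), P*(t,x) = P(t−t₀, x−x₀−Ct) + P₀(t) also solve the dimensionless Choi–Camassa system with parameter S at every point. -/

import Mathlib

/-- Partial derivative in the first (time) variable. -/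
noncomputable def pdt (f : ℝ × ℝ → ℝ) (p : ℝ × ℝ) : ℝ := deriv (fun s => f (s, p.2)) p.1

/-- Partial derivative in the second (space) variable. -/
noncomputable def pdx (f : ℝ × ℝ → ℝ) (p : ℝ × ℝ) : ℝ := deriv (fun y => f (p.1, y)) p.2

/-- G_i = ∂ₜ∂ₓv + v ∂ₓ²v − (∂ₓv)². -/
noncomputable def Gpd (v : ℝ × ℝ → ℝ) (p : ℝ × ℝ) : ℝ :=
  pdt (pdx v) p + v p * pdx (pdx v) p - (pdx v p) ^ 2

/-- The dimensionless Choi–Camassa system with density-ratio parameter `S`. -/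
def CCsystem (S : ℝ) (Z v₁ v₂ P : ℝ × ℝ → ℝ) : Prop :=
  (∀ p : ℝ × ℝ, pdt Z p + pdx (fun q => Z q * v₁ q) p = 0) ∧
  (∀ p : ℝ × ℝ, pdt Z p + pdx (fun q => Z q * v₂ q) p - pdx v₂ p = 0) ∧
  (∀ p : ℝ × ℝ, pdt v₁ p + v₁ p * pdx v₁ p - pdx Z p + pdx P p
      - Z p * pdx Z p * Gpd v₁ p - (1/3) * (Z p) ^ 2 * pdx (Gpd v₁) p = 0) ∧
  (∀ p : ℝ × ℝ, pdt v₂ p + v₂ p * pdx v₂ p - pdx Z p + S * pdx P p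
      - (1/3) * (1 - Z p) ^ 2 * pdx (Gpd v₂) p + (1 - Z p) * pdx Z p * Gpd v₂ p = 0)

/-! ### Auxiliary lemmas -/

lemma pdx_shift (f : ℝ × ℝ → ℝ) (t₀ x₀ C : ℝ) (p : ℝ × ℝ) :
    pdx (fun q => f (q.1 - t₀, q.2 - x₀ - C * q.1)) p
      = pdx f (p.1 - t₀, p.2 - x₀ - C * p.1) := by
  have h : ∀ y : ℝ, y - x₀ - C * p.1 = y - (x₀ + C * p.1) := fun y => by ring
  simp only [pdx, h]
  exact deriv_comp_sub_const (fun y => f (p.1 - t₀, y)) (x₀ + C * p.1) p.2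

lemma pdx_eq_fderiv (f : ℝ × ℝ → ℝ) (q : ℝ × ℝ) (hf : DifferentiableAt ℝ f q) :
    pdx f q = fderiv ℝ f q (0, 1) := by
  have hc : HasDerivAt (fun y : ℝ => ((q.1, y) : ℝ × ℝ)) (0, 1) q.2 :=
    (hasDerivAt_const q.2 q.1).prodMk (hasDerivAt_id q.2)
  exact (hf.hasFDerivAt.comp_hasDerivAt q.2 hc).deriv

lemma pdt_eq_fderiv (f : ℝ × ℝ → ℝ) (q : ℝ × ℝ) (hf : DifferentiableAt ℝ f q) :
    pdt f q = fderiv ℝ f q (1, 0) := by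
  have hc : HasDerivAt (fun s : ℝ => ((s, q.2) : ℝ × ℝ)) (1, 0) q.1 :=
    (hasDerivAt_id q.1).prodMk (hasDerivAt_const q.1 q.2)
  exact (hf.hasFDerivAt.comp_hasDerivAt q.1 hc).deriv

lemma pdt_shift (f : ℝ × ℝ → ℝ) (t₀ x₀ C : ℝ) (p : ℝ × ℝ)
    (hf : DifferentiableAt ℝ f (p.1 - t₀, p.2 - x₀ - C * p.1)) :
    pdt (fun q => f (q.1 - t₀, q.2 - x₀ - C * q.1)) p
      = pdt f (p.1 - t₀, p.2 - x₀ - C * p.1)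
        - C * pdx f (p.1 - t₀, p.2 - x₀ - C * p.1) := by
  have hc : HasDerivAt (fun s : ℝ => ((s - t₀, p.2 - x₀ - C * s) : ℝ × ℝ)) (1, -C) p.1 := by
    have h1 : HasDerivAt (fun s : ℝ => s - t₀) 1 p.1 := (hasDerivAt_id p.1).sub_const t₀
    have h2 : HasDerivAt (fun s : ℝ => p.2 - x₀ - C * s) (-C) p.1 := by
      have := ((hasDerivAt_id p.1).const_mul C).const_sub (p.2 - x₀)
      simpa using this
    exact h1.prodMk h2
  have key : pdt (fun q => f (q.1 - t₀, q.2 - x₀ - C * q.1)) p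
      = fderiv ℝ f (p.1 - t₀, p.2 - x₀ - C * p.1) (1, -C) :=
    (hf.hasFDerivAt.comp_hasDerivAt p.1 hc).deriv
  rw [key, pdt_eq_fderiv f _ hf, pdx_eq_fderiv f _ hf]
  have : ((1, -C) : ℝ × ℝ) = (1, 0) - C • (0, 1) := by simp [Prod.ext_iff]
  rw [this, map_sub, map_smul]
  simp [smul_eq_mul]

lemma pdx_mul (f g : ℝ × ℝ → ℝ) (p : ℝ × ℝ)
    (hf : DifferentiableAt ℝ f p) (hg : DifferentiableAt ℝ g p) :
    pdx (fun q => f q * g q) p = pdx f p * g p + f p * pdx g p := by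
  have hc : DifferentiableAt ℝ (fun y : ℝ => ((p.1, y) : ℝ × ℝ)) p.2 :=
    (differentiableAt_const _).prodMk differentiableAt_id
  have hf' : DifferentiableAt ℝ (fun y => f (p.1, y)) p.2 := hf.comp p.2 hc
  have hg' : DifferentiableAt ℝ (fun y => g (p.1, y)) p.2 := hg.comp p.2 hc
  simpa [pdx] using deriv_fun_mul hf' hg'

lemma contDiff_pdx (f : ℝ × ℝ → ℝ) (hf : ContDiff ℝ 3 f) : ContDiff ℝ 2 (pdx f) := by
  have hd : Differentiable ℝ f := hf.differentiable (by norm_num)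
  have : pdx f = fun q => fderiv ℝ f q (0, 1) := by
    funext q; exact pdx_eq_fderiv f q (hd q)
  rw [this]
  exact (hf.fderiv_right (by norm_num)).clm_apply contDiff_const

/-- `pdx` of a shifted field with an added constant. -/
lemma pdx_shiftC (f : ℝ × ℝ → ℝ) (t₀ x₀ C c : ℝ) (p : ℝ × ℝ) :
    pdx (fun q => f (q.1 - t₀, q.2 - x₀ - C * q.1) + c) p
      = pdx f (p.1 - t₀, p.2 - x₀ - C * p.1) := by
  have := pdx_shift f t₀ x₀ C p
  simp only [pdx] at this ⊢
  rw [deriv_add_const]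
  exact this

/-- `pdt` of a shifted field with an added constant. -/
lemma pdt_shiftC (f : ℝ × ℝ → ℝ) (t₀ x₀ C c : ℝ) (p : ℝ × ℝ)
    (hf : DifferentiableAt ℝ f (p.1 - t₀, p.2 - x₀ - C * p.1)) :
    pdt (fun q => f (q.1 - t₀, q.2 - x₀ - C * q.1) + c) p
      = pdt f (p.1 - t₀, p.2 - x₀ - C * p.1)
        - C * pdx f (p.1 - t₀, p.2 - x₀ - C * p.1) := by
  have := pdt_shift f t₀ x₀ C p hf
  simp only [pdt] at this ⊢
  rw [deriv_add_const]
  exact this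

lemma Gpd_shiftC (v : ℝ × ℝ → ℝ) (hv : ContDiff ℝ 3 v) (t₀ x₀ C : ℝ) (p : ℝ × ℝ) :
    Gpd (fun q => v (q.1 - t₀, q.2 - x₀ - C * q.1) + C) p
      = Gpd v (p.1 - t₀, p.2 - x₀ - C * p.1) := by
  have hpdxv : Differentiable ℝ (pdx v) :=
    (contDiff_pdx v hv).differentiable (by norm_num)
  have hA : pdx (fun q => v (q.1 - t₀, q.2 - x₀ - C * q.1) + C)
      = fun q => pdx v (q.1 - t₀, q.2 - x₀ - C * q.1) :=
    funext fun q => pdx_shiftC v t₀ x₀ C C q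
  simp only [Gpd, hA]
  rw [pdx_shift (pdx v) t₀ x₀ C p,
    pdt_shift (pdx v) t₀ x₀ C p (hpdxv _)]
  ring

lemma pdxGpd_shiftC (v : ℝ × ℝ → ℝ) (hv : ContDiff ℝ 3 v) (t₀ x₀ C : ℝ) (p : ℝ × ℝ) :
    pdx (Gpd (fun q => v (q.1 - t₀, q.2 - x₀ - C * q.1) + C)) p
      = pdx (Gpd v) (p.1 - t₀, p.2 - x₀ - C * p.1) := by
  have hA : Gpd (fun q => v (q.1 - t₀, q.2 - x₀ - C * q.1) + C)
      = fun q => Gpd v (q.1 - t₀, q.2 - x₀ - C * q.1) :=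
    funext fun q => Gpd_shiftC v hv t₀ x₀ C q
  rw [hA]
  exact pdx_shift (Gpd v) t₀ x₀ C p

theorem stmt1 (S : ℝ) (Z v₁ v₂ P : ℝ × ℝ → ℝ)
    (hZ : ContDiff ℝ 3 Z) (hv₁ : ContDiff ℝ 3 v₁) (hv₂ : ContDiff ℝ 3 v₂)
    (hP : ContDiff ℝ 3 P)
    (hsol : CCsystem S Z v₁ v₂ P)
    (t₀ x₀ C : ℝ) (P₀ : ℝ → ℝ) (hP₀ : Differentiable ℝ P₀) :
    CCsystem S
      (fun p => Z (p.1 - t₀, p.2 - x₀ - C * p.1))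
      (fun p => v₁ (p.1 - t₀, p.2 - x₀ - C * p.1) + C)
      (fun p => v₂ (p.1 - t₀, p.2 - x₀ - C * p.1) + C)
      (fun p => P (p.1 - t₀, p.2 - x₀ - C * p.1) + P₀ p.1) := by
  obtain ⟨h1, h2, h3, h4⟩ := hsol
  have hZd : Differentiable ℝ Z := hZ.differentiable (by norm_num)
  have hv₁d : Differentiable ℝ v₁ := hv₁.differentiable (by norm_num)
  have hv₂d : Differentiable ℝ v₂ := hv₂.differentiable (by norm_num)
  have hPd : Differentiable ℝ P := hP.differentiable (by norm_num)
  have hσ : ∀ p : ℝ × ℝ,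
      DifferentiableAt ℝ (fun q : ℝ × ℝ => ((q.1 - t₀, q.2 - x₀ - C * q.1) : ℝ × ℝ)) p :=
    fun p => by fun_prop
  -- differentiability of the shifted composites
  have hZσ : ∀ p : ℝ × ℝ,
      DifferentiableAt ℝ (fun q : ℝ × ℝ => Z (q.1 - t₀, q.2 - x₀ - C * q.1)) p :=
    fun p => (hZd _).comp p (hσ p)
  have hv₁σ : ∀ p : ℝ × ℝ,
      DifferentiableAt ℝ (fun q : ℝ × ℝ => v₁ (q.1 - t₀, q.2 - x₀ - C * q.1) + C) p :=
    fun p => ((hv₁d _).comp p (hσ p)).add_const C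
  have hv₂σ : ∀ p : ℝ × ℝ,
      DifferentiableAt ℝ (fun q : ℝ × ℝ => v₂ (q.1 - t₀, q.2 - x₀ - C * q.1) + C) p :=
    fun p => ((hv₂d _).comp p (hσ p)).add_const C
  -- rewrite the original equations with the product rule
  have hmul : ∀ (v : ℝ × ℝ → ℝ), Differentiable ℝ v → ∀ q : ℝ × ℝ,
      pdx (fun q => Z q * v q) q = pdx Z q * v q + Z q * pdx v q :=
    fun v hvd q => pdx_mul Z v q (hZd q) (hvd q)
  refine ⟨fun p => ?_, fun p => ?_, fun p => ?_, fun p => ?_⟩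
  all_goals
    set q : ℝ × ℝ := (p.1 - t₀, p.2 - x₀ - C * p.1) with hq
    beta_reduce
  · -- mass equation for layer 1
    have e1 : pdt (fun q : ℝ × ℝ => Z (q.1 - t₀, q.2 - x₀ - C * q.1)) p
        = pdt Z q - C * pdx Z q := pdt_shift Z t₀ x₀ C p (hZd q)
    have e2 : pdx (fun r : ℝ × ℝ => Z (r.1 - t₀, r.2 - x₀ - C * r.1)
          * (v₁ (r.1 - t₀, r.2 - x₀ - C * r.1) + C)) p
        = pdx Z q * (v₁ q + C) + Z q * pdx v₁ q := by
      rw [pdx_mul _ _ p (hZσ p) (hv₁σ p), pdx_shift Z t₀ x₀ C p,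
        pdx_shiftC v₁ t₀ x₀ C C p]
    rw [e1, e2]
    have := h1 q
    rw [hmul v₁ hv₁d q] at this
    linarith
  · -- mass equation for layer 2
    have e1 : pdt (fun q : ℝ × ℝ => Z (q.1 - t₀, q.2 - x₀ - C * q.1)) p
        = pdt Z q - C * pdx Z q := pdt_shift Z t₀ x₀ C p (hZd q)
    have e2 : pdx (fun r : ℝ × ℝ => Z (r.1 - t₀, r.2 - x₀ - C * r.1)
          * (v₂ (r.1 - t₀, r.2 - x₀ - C * r.1) + C)) p
        = pdx Z q * (v₂ q + C) + Z q * pdx v₂ q := by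
      rw [pdx_mul _ _ p (hZσ p) (hv₂σ p), pdx_shift Z t₀ x₀ C p,
        pdx_shiftC v₂ t₀ x₀ C C p]
    rw [e1, e2, pdx_shiftC v₂ t₀ x₀ C C p]
    have := h2 q
    rw [hmul v₂ hv₂d q] at this
    linarith
  · -- momentum equation for layer 1
    rw [pdt_shiftC v₁ t₀ x₀ C C p (hv₁d q), pdx_shiftC v₁ t₀ x₀ C C p,
      pdx_shift Z t₀ x₀ C p, Gpd_shiftC v₁ hv₁ t₀ x₀ C p,
      pdxGpd_shiftC v₁ hv₁ t₀ x₀ C p]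
    have eP : pdx (fun r : ℝ × ℝ => P (r.1 - t₀, r.2 - x₀ - C * r.1) + P₀ r.1) p
        = pdx P q := by
      have := pdx_shift P t₀ x₀ C p
      simp only [pdx] at this ⊢
      rw [deriv_add_const]
      exact this
    rw [eP]
    linear_combination h3 q
  · -- momentum equation for layer 2
    rw [pdt_shiftC v₂ t₀ x₀ C C p (hv₂d q), pdx_shiftC v₂ t₀ x₀ C C p,
      pdx_shift Z t₀ x₀ C p, Gpd_shiftC v₂ hv₂ t₀ x₀ C p,
      pdxGpd_shiftC v₂ hv₂ t₀ x₀ C p]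
    have eP : pdx (fun r : ℝ × ℝ => P (r.1 - t₀, r.2 - x₀ - C * r.1) + P₀ r.1) p
        = pdx P q := by
      have := pdx_shift P t₀ x₀ C p
      simp only [pdx] at this ⊢
      rw [deriv_add_const]
      exact this
    rw [eP]
    linear_combination h4 q
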